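/- Let P be a connected type-C poset of height one. If the relation graph RG(P) contains two vertex-disjoint odd cycles, then g_C(P) is not contact. -/

import Mathlib

open scoped DirectSum

namespace LiePoset

/-- A type-C poset on the ground set `{-n, …, -1, 1, …, n} ⊆ ℤ`:
a partial order `le` supported on that set such that `i ≼ j` implies `i ≤ j` in `ℤ`,
and for `i ≠ -j`, `i ≼ j ↔ -j ≼ -i`. -/
structure TypeCPoset (n : ℕ) where
  le : ℤ → ℤ → Prop
  supp : ∀ ⦃i j : ℤ⦄, le i j → i ≠ 0 ∧ |i| ≤ (n : ℤ) ∧ j ≠ 0 ∧ |j| ≤ (n : ℤ)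
  refl : ∀ i : ℤ, i ≠ 0 → |i| ≤ (n : ℤ) → le i i
  antisymm : ∀ ⦃i j : ℤ⦄, le i j → le j i → i = j
  trans : ∀ ⦃i j k : ℤ⦄, le i j → le j k → le i k
  compat : ∀ ⦃i j : ℤ⦄, le i j → i ≤ j
  nsymm : ∀ ⦃i j : ℤ⦄, i ≠ -j → (le i j ↔ le (-j) (-i))

namespace TypeCPoset

variable {n : ℕ}

/-- The strict relation `i ≺ j` of a type-C poset. -/
def lt (P : TypeCPoset n) (i j : ℤ) : Prop := P.le i j ∧ i ≠ j

/-- `P` has height one: every chain of `P` has cardinality at most two. -/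
def HeightOne (P : TypeCPoset n) : Prop := ∀ i j k : ℤ, P.lt i j → P.lt j k → False

/-- `P` is separable: there is no relation `x ≺ y` with `x` negative and `y` positive. -/
def Separable (P : TypeCPoset n) : Prop := ∀ i j : ℤ, i < 0 → 0 < j → ¬ P.lt i j

/-- `P` has height `(1,1)`: `P⁺` has height exactly one and `P` has height exactly one. -/
def Height11 (P : TypeCPoset n) : Prop :=
  P.HeightOne ∧ ∃ i j : ℤ, 0 < i ∧ 0 < j ∧ P.lt i j

/-- `P` has height `(0,1)`: `P⁺` has height zero and `P` has height exactly one. -/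
def Height01 (P : TypeCPoset n) : Prop :=
  P.HeightOne ∧ (∀ i j : ℤ, 0 < i → 0 < j → ¬ P.lt i j) ∧ ∃ i j : ℤ, P.lt i j

end TypeCPoset

/-- The vertex set of the relation graph: the positive elements `{1, …, n}`. -/
abbrev Pos (n : ℕ) : Type := {i : ℤ // i ∈ Finset.Icc (1 : ℤ) (n : ℤ)}

/-- The matrix index set `{-n, …, -1, 1, …, n}`. -/
abbrev Idx (n : ℕ) : Type := {i : ℤ // i ∈ (Finset.Icc (-(n : ℤ)) (n : ℤ)).erase 0}

/-- Negation on the index set. -/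
def Idx.neg {n : ℕ} (a : Idx n) : Idx n :=
  ⟨-a.val, by
    have h := a.property
    simp only [Finset.mem_erase, Finset.mem_Icc] at h ⊢
    omega⟩

/-- A positive vertex as a matrix index. -/
def Pos.toIdx {n : ℕ} (i : Pos n) : Idx n :=
  ⟨i.val, by
    have h := i.property
    simp only [Finset.mem_erase, Finset.mem_Icc] at h ⊢
    omega⟩

/-- `2n × 2n` complex matrices, with rows and columns indexed by `{-n, …, -1, 1, …, n}`. -/
abbrev Mat (n : ℕ) : Type := Matrix (Idx n) (Idx n) ℂ

namespace TypeCPoset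

variable {n : ℕ}

/-- `D_i = E_{-i,-i} - E_{i,i}`. -/
def Dmat (i : Pos n) : Mat n :=
  Matrix.single i.toIdx.neg i.toIdx.neg 1 - Matrix.single i.toIdx i.toIdx 1

/-- `R^±_{i,j} = E_{-i,j} + E_{-j,i}`. -/
def Rpm (i j : Pos n) : Mat n :=
  Matrix.single i.toIdx.neg j.toIdx 1 + Matrix.single j.toIdx.neg i.toIdx 1

/-- `R_{i,j} = E_{-j,-i} - E_{i,j}`. -/
def Rdash (i j : Pos n) : Mat n :=
  Matrix.single j.toIdx.neg i.toIdx.neg 1 - Matrix.single i.toIdx j.toIdx 1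

/-- `E_{-i,i}`. -/
def Eloop (i : Pos n) : Mat n := Matrix.single i.toIdx.neg i.toIdx 1

/-- The standard spanning set of the type-C Lie poset algebra `g_C(P)`. -/
def gcSet (P : TypeCPoset n) : Set (Mat n) :=
  {M | (∃ i : Pos n, M = Dmat i)
      ∨ (∃ i j : Pos n, P.lt (-j.val) (-i.val) ∧ M = Rdash i j)
      ∨ (∃ i j : Pos n, P.lt (-i.val) j.val ∧ P.lt (-j.val) i.val ∧ M = Rpm i j)
      ∨ (∃ i : Pos n, P.lt (-i.val) i.val ∧ M = Eloop i)}

/-- The simple graph underlying the relation graph `RG(P)`: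
vertices `{1, …, n}`, with `i` adjacent to `j` (for `i ≠ j`) whenever there is a
(dashed or non-dashed) edge between them. -/
def RG (P : TypeCPoset n) : SimpleGraph (Pos n) where
  Adj i j := i ≠ j ∧ (P.lt (-i.val) j.val ∨ P.lt (-j.val) i.val ∨
      P.lt (-i.val) (-j.val) ∨ P.lt (-j.val) (-i.val))
  symm := by
    constructor
    intro i j h
    exact ⟨h.1.symm, by tauto⟩
  loopless := by
    constructor
    intro i h
    exact h.1 rfl

/-- `RG(P)` has a (non-dashed) self-loop at vertex `i`, i.e. `-i ≺ i`. -/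
def HasLoopAt (P : TypeCPoset n) (i : Pos n) : Prop := P.lt (-i.val) i.val

/-- There is a dashed edge `{i,j}` in `RG(P)`. -/
def DashedEdge (P : TypeCPoset n) (i j : Pos n) : Prop :=
  P.lt (-i.val) (-j.val) ∨ P.lt (-j.val) (-i.val)

/-- There is a non-dashed edge `{i,j}` in `RG(P)` (a self-loop when `i = j`). -/
def NonDashedEdge (P : TypeCPoset n) (i j : Pos n) : Prop :=
  P.lt (-i.val) j.val ∨ P.lt (-j.val) i.val

open scoped Classical in
/-- The set of non-dashed edges of `RG(P)` (including self-loops). -/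
noncomputable def edgesND (P : TypeCPoset n) : Finset (Sym2 (Pos n)) :=
  Finset.univ.filter fun e => ∃ i j : Pos n, e = Sym2.mk i j ∧ NonDashedEdge P i j

open scoped Classical in
/-- The set of dashed edges of `RG(P)`. -/
noncomputable def edgesD (P : TypeCPoset n) : Finset (Sym2 (Pos n)) :=
  Finset.univ.filter fun e => ∃ i j : Pos n, e = Sym2.mk i j ∧ i ≠ j ∧ DashedEdge P i j

/-- `|E(P)|`, the number of edges of `RG(P)`. -/
noncomputable def numEdges (P : TypeCPoset n) : ℕ := (P.edgesND).card + (P.edgesD).card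

/-- The cycles of `RG(P)`, recorded by their edge sets: a self-loop at `v`, or a cycle
of the underlying simple graph.  A cycle has an odd (resp. even) number of vertices
iff its edge set has odd (resp. even) cardinality. -/
def cycles (P : TypeCPoset n) : Set (Finset (Sym2 (Pos n))) :=
  {s | ∃ v : Pos n, P.HasLoopAt v ∧ s = {Sym2.mk v v}} ∪
  {s | ∃ (v : Pos n) (p : (RG P).Walk v v), p.IsCycle ∧ s = p.edges.toFinset}

/-- The cycles of `RG(P)` contained in the connected component `c`. -/
def cyclesIn (P : TypeCPoset n) (c : (RG P).ConnectedComponent) :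
    Set (Finset (Sym2 (Pos n))) :=
  {s | ∃ v : Pos n, (RG P).connectedComponentMk v = c ∧
    ((P.HasLoopAt v ∧ s = {Sym2.mk v v}) ∨
      ∃ p : (RG P).Walk v v, p.IsCycle ∧ s = p.edges.toFinset)}

/-- `η(P)`: the number of connected components of `RG(P)` containing no odd cycles. -/
noncomputable def eta (P : TypeCPoset n) : ℕ :=
  Nat.card {c : (RG P).ConnectedComponent // ¬ ∃ s ∈ P.cyclesIn c, Odd s.card}

/-- The vertices visited by a cycle, recorded by its edge set. -/
def cycleVerts (s : Finset (Sym2 (Pos n))) : Set (Pos n) := {v | ∃ e ∈ s, v ∈ e}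

end TypeCPoset

section LieDefs

variable (L : Type*) [LieRing L] [LieAlgebra ℂ L]

/-- The kernel of the bilinear form `B_φ(x, y) = φ⁅x, y⁆`. -/
def coadjKernel (φ : Module.Dual ℂ L) : Submodule ℂ L where
  carrier := {x | ∀ y : L, φ ⁅x, y⁆ = 0}
  add_mem' := by
    intro a b ha hb y
    simp only [Set.mem_setOf_eq] at ha hb ⊢
    rw [add_lie, map_add, ha y, hb y, add_zero]
  zero_mem' := by
    intro y
    rw [zero_lie, map_zero]
  smul_mem' := by
    intro c x hx y
    simp only [Set.mem_setOf_eq] at hx ⊢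
    rw [smul_lie, map_smul, hx y, smul_zero]

/-- The index of a Lie algebra: `ind g = min_{φ ∈ g*} dim ker(B_φ)`. -/
noncomputable def lieIndex : ℕ :=
  sInf (Set.range fun φ : Module.Dual ℂ L => Module.finrank ℂ (coadjKernel L φ))

/-- `φ` is a contact form on `L`: `L` is odd-dimensional and the restriction of
`B_φ(x, y) = φ⁅x, y⁆` to `ker φ` is nondegenerate. -/
def IsContactForm (φ : Module.Dual ℂ L) : Prop :=
  Odd (Module.finrank ℂ L) ∧
    ∀ x : L, φ x = 0 → (∀ y : L, φ y = 0 → φ ⁅x, y⁆ = 0) → x = 0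

/-- `L` is a contact Lie algebra. -/
def IsContact : Prop := ∃ φ : Module.Dual ℂ L, IsContactForm L φ

end LieDefs

end LiePoset

attribute [instance] LieRing.ofAssociativeRing


namespace LiePoset

open Matrix TypeCPoset

variable {n : ℕ}

/-! ### Basic facts about `Pos` and `Idx` -/

lemma Pos.one_le_val (i : Pos n) : 1 ≤ i.val := (Finset.mem_Icc.mp i.property).1

lemma Pos.toIdx_val (i : Pos n) : (Pos.toIdx i).val = i.val := rfl

lemma Idx.neg_val (a : Idx n) : (Idx.neg a).val = -a.val := rfl

lemma toIdx_eq_toIdx {i j : Pos n} : Pos.toIdx i = Pos.toIdx j ↔ i = j := by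
  constructor
  · intro h
    have h2 := congrArg (Subtype.val : Idx n → ℤ) h
    exact Subtype.ext h2
  · rintro rfl; rfl

lemma negtoIdx_eq_negtoIdx {i j : Pos n} :
    (Pos.toIdx i).neg = (Pos.toIdx j).neg ↔ i = j := by
  constructor
  · intro h
    have h2 : -i.val = -j.val := congrArg (Subtype.val : Idx n → ℤ) h
    exact Subtype.ext (by omega)
  · rintro rfl; rfl

lemma toIdx_ne_negtoIdx (i j : Pos n) : Pos.toIdx i ≠ (Pos.toIdx j).neg := by
  intro h
  have h2 : i.val = -j.val := congrArg Subtype.val h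
  have := i.one_le_val; have := j.one_le_val; omega

lemma negtoIdx_ne_toIdx (i j : Pos n) : (Pos.toIdx i).neg ≠ Pos.toIdx j := by
  intro h
  have h2 : -i.val = j.val := congrArg Subtype.val h
  have := i.one_le_val; have := j.one_le_val; omega

/-! ### stdBasisMatrix multiplication and bracket -/

lemma mulE {m : Type*} [Fintype m] [DecidableEq m] (a b c d : m) :
    (Matrix.single a b (1 : ℂ)) * Matrix.single c d (1 : ℂ)
      = if b = c then Matrix.single a d 1 else 0 := by
  split_ifs with h
  · subst h
    simpa using Matrix.single_mul_single_same a b (1:ℂ) d 1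
  · exact Matrix.single_mul_single_of_ne (c := (1:ℂ)) a b c h 1

lemma lieE {m : Type*} [Fintype m] [DecidableEq m] (a b c d : m) :
    ⁅(Matrix.single a b (1 : ℂ) : Matrix m m ℂ), Matrix.single c d (1 : ℂ)⁆
      = (if b = c then Matrix.single a d (1 : ℂ) else 0)
        - (if d = a then Matrix.single c b (1 : ℂ) else 0) := by
  rw [Ring.lie_def, mulE, mulE]

/-! ### Poset helper lemmas -/

namespace TypeCPoset

variable (P : TypeCPoset n)

lemma lt_flip {a b : ℤ} (h : P.lt a b) (hne : a ≠ -b) : P.lt (-b) (-a) :=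
  ⟨(P.nsymm hne).mp h.1, fun hc => h.2 (by omega)⟩

/-- From a dashed relation `-j ≺ -i` we get `i ≺ j`. -/
lemma lt_pos_of_dashed {i j : Pos n} (h : P.lt (-j.val) (-i.val)) :
    P.lt i.val j.val := by
  have hne : -j.val ≠ -(-i.val) := by
    have := i.one_le_val; have := j.one_le_val; omega
  simpa using P.lt_flip h hne

/-- From `-i ≺ j` with `i ≠ j` we get `-j ≺ i`. -/
lemma lt_swap_nd {i j : Pos n} (h : P.lt (-i.val) j.val) (hne : i ≠ j) :
    P.lt (-j.val) i.val := by
  have hne' : -i.val ≠ -j.val := by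
    intro hc
    exact hne (Subtype.ext (by omega))
  simpa using P.lt_flip h hne'

end TypeCPoset

end LiePoset
namespace LiePoset

open Matrix

variable {n : ℕ}

namespace TypeCPoset

/-! ### Brackets between generators -/

section BracketLemmas

variable (i j k l : Pos n)

lemma lie_Rpm_Dmat :
    ⁅Rpm i j, Dmat k⁆
      = (-(((if k = i then (1:ℂ) else 0) + (if k = j then 1 else 0)))) • Rpm i j := by
  have h1 := toIdx_ne_negtoIdx (n := n)
  have h2 := negtoIdx_ne_toIdx (n := n)
  by_cases hki : k = i
  · by_cases hkj : k = j
    · subst hki; subst hkj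
      simp [Rpm, Dmat, Ring.lie_def, mul_sub, sub_mul, mul_add, add_mul, mulE,
        toIdx_eq_toIdx, negtoIdx_eq_negtoIdx, h1, h2, -Matrix.smul_single]
      module
    · have hjk : ¬ j = k := fun h => hkj h.symm
      subst hki
      simp [Rpm, Dmat, Ring.lie_def, mul_sub, sub_mul, mul_add, add_mul, mulE,
        toIdx_eq_toIdx, negtoIdx_eq_negtoIdx, h1, h2, hkj, hjk]
      module
  · have hik : ¬ i = k := fun h => hki h.symm
    by_cases hkj : k = j
    · subst hkj
      simp [Rpm, Dmat, Ring.lie_def, mul_sub, sub_mul, mul_add, add_mul, mulE,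
        toIdx_eq_toIdx, negtoIdx_eq_negtoIdx, h1, h2, hki, hik]
      module
    · have hjk : ¬ j = k := fun h => hkj h.symm
      simp [Rpm, Dmat, Ring.lie_def, mul_sub, sub_mul, mul_add, add_mul, mulE,
        toIdx_eq_toIdx, negtoIdx_eq_negtoIdx, h1, h2, hki, hik, hkj, hjk]

lemma lie_Rdash_Dmat :
    ⁅Rdash i j, Dmat k⁆
      = (-(((if k = j then (1:ℂ) else 0) - (if k = i then 1 else 0)))) • Rdash i j := by
  have h1 := toIdx_ne_negtoIdx (n := n)
  have h2 := negtoIdx_ne_toIdx (n := n)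
  by_cases hki : k = i
  · by_cases hkj : k = j
    · subst hki; subst hkj
      simp [Rdash, Dmat, Ring.lie_def, mul_sub, sub_mul, mul_add, add_mul, mulE,
        toIdx_eq_toIdx, negtoIdx_eq_negtoIdx, h1, h2]
    · have hjk : ¬ j = k := fun h => hkj h.symm
      subst hki
      simp [Rdash, Dmat, Ring.lie_def, mul_sub, sub_mul, mul_add, add_mul, mulE,
        toIdx_eq_toIdx, negtoIdx_eq_negtoIdx, h1, h2, hkj, hjk]
  · have hik : ¬ i = k := fun h => hki h.symm
    by_cases hkj : k = j
    · subst hkj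
      simp [Rdash, Dmat, Ring.lie_def, mul_sub, sub_mul, mul_add, add_mul, mulE,
        toIdx_eq_toIdx, negtoIdx_eq_negtoIdx, h1, h2, hki, hik]
    · have hjk : ¬ j = k := fun h => hkj h.symm
      simp [Rdash, Dmat, Ring.lie_def, mul_sub, sub_mul, mul_add, add_mul, mulE,
        toIdx_eq_toIdx, negtoIdx_eq_negtoIdx, h1, h2, hki, hik, hkj, hjk]

lemma lie_Rpm_Rpm : ⁅Rpm i j, Rpm k l⁆ = 0 := by
  have h1 := toIdx_ne_negtoIdx (n := n)
  simp [Rpm, Ring.lie_def, mul_add, add_mul, mulE, h1]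

lemma lie_Rpm_Eloop : ⁅Rpm i j, Eloop k⁆ = 0 := by
  have h1 := toIdx_ne_negtoIdx (n := n)
  simp [Rpm, Eloop, Ring.lie_def, mul_add, add_mul, mulE, h1]

end BracketLemmas

section BracketZero

variable {P : TypeCPoset n} (hP : P.HeightOne)
include hP

lemma lie_Rdash_Rdash {i j k l : Pos n}
    (hij : P.lt (-j.val) (-i.val)) (hkl : P.lt (-l.val) (-k.val)) :
    ⁅Rdash i j, Rdash k l⁆ = 0 := by
  have h1 := toIdx_ne_negtoIdx (n := n)
  have h2 := negtoIdx_ne_toIdx (n := n)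
  have hil : ¬ i = l := by
    intro h
    exact hP _ _ _ hij (by rw [show i.val = l.val from congrArg Subtype.val h]; exact hkl)
  have hli : ¬ l = i := fun h => hil h.symm
  have hjk : ¬ j = k := by
    intro h
    exact hP _ _ _ hkl (by rw [show k.val = j.val from (congrArg Subtype.val h).symm]; exact hij)
  have hkj : ¬ k = j := fun h => hjk h.symm
  simp [Rdash, Ring.lie_def, mul_sub, sub_mul, mulE, toIdx_eq_toIdx, negtoIdx_eq_negtoIdx,
    h1, h2, hil, hli, hjk, hkj]

lemma lie_Rdash_Rpm {i j k l : Pos n}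
    (hij : P.lt (-j.val) (-i.val)) (hkl : P.lt (-k.val) l.val) (hlk : P.lt (-l.val) k.val) :
    ⁅Rdash i j, Rpm k l⁆ = 0 := by
  have h1 := toIdx_ne_negtoIdx (n := n)
  have h2 := negtoIdx_ne_toIdx (n := n)
  have hij' : P.lt i.val j.val := P.lt_pos_of_dashed hij
  have hik : ¬ i = k := by
    intro h
    exact hP _ _ _ hij ((congrArg (fun z : Pos n => P.lt (-z.val) l.val) h).symm ▸ hkl)
  have hki : ¬ k = i := fun h => hik h.symm
  have hil : ¬ i = l := by
    intro h
    exact hP _ _ _ hij ((congrArg (fun z : Pos n => P.lt (-z.val) k.val) h).symm ▸ hlk)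
  have hli : ¬ l = i := fun h => hil h.symm
  simp [Rdash, Rpm, Ring.lie_def, mul_sub, sub_mul, mul_add, add_mul, mulE,
    toIdx_eq_toIdx, negtoIdx_eq_negtoIdx, h1, h2, hik, hki, hil, hli]

lemma lie_Rdash_Eloop {i j k : Pos n}
    (hij : P.lt (-j.val) (-i.val)) (hk : P.lt (-k.val) k.val) :
    ⁅Rdash i j, Eloop k⁆ = 0 := by
  have h1 := toIdx_ne_negtoIdx (n := n)
  have h2 := negtoIdx_ne_toIdx (n := n)
  have hik : ¬ i = k := by
    intro h
    exact hP _ _ _ hij ((congrArg (fun z : Pos n => P.lt (-z.val) z.val) h).symm ▸ hk)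
  have hki : ¬ k = i := fun h => hik h.symm
  simp [Rdash, Eloop, Ring.lie_def, mul_sub, sub_mul, mulE,
    toIdx_eq_toIdx, negtoIdx_eq_negtoIdx, h1, h2, hik, hki]

lemma lie_Rpm_Rdash {i j k l : Pos n}
    (hkl : P.lt (-l.val) (-k.val)) (hij : P.lt (-i.val) j.val) (hji : P.lt (-j.val) i.val) :
    ⁅Rpm i j, Rdash k l⁆ = 0 := by
  rw [← lie_skew, lie_Rdash_Rpm hP hkl hij hji, neg_zero]

end BracketZero

end TypeCPoset

end LiePoset
namespace LiePoset

open Matrix TypeCPoset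

open scoped Classical

variable {n : ℕ}

/-- Index type for generator candidates. -/
abbrev GKey (n : ℕ) := (Pos n × Pos n) × Bool

/-- Whether a key corresponds to an actual generator of `g_C(P)`. -/
def genOK (P : TypeCPoset n) (q : GKey n) : Prop :=
  if q.2 then P.lt (-q.1.2.val) (-q.1.1.val)
  else P.lt (-q.1.1.val) q.1.2.val ∧ P.lt (-q.1.2.val) q.1.1.val ∧ q.1.1.val ≤ q.1.2.val

/-- The generator matrix for a key. -/
def Xgen (q : GKey n) : Mat n :=
  if q.2 then TypeCPoset.Rdash q.1.1 q.1.2 else TypeCPoset.Rpm q.1.1 q.1.2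

/-- The "incidence" coefficient: `⁅Xgen q, Dmat k⁆ = -(cf k q) • Xgen q`. -/
noncomputable def cf (k : Pos n) (q : GKey n) : ℂ :=
  if q.2 then (if k = q.1.2 then 1 else 0) - (if k = q.1.1 then 1 else 0)
  else (if k = q.1.1 then 1 else 0) + (if k = q.1.2 then 1 else 0)

/-- The finite set of generator keys. -/
noncomputable def Egen (P : TypeCPoset n) : Finset (GKey n) :=
  Finset.univ.filter (genOK P)

lemma mem_Egen {P : TypeCPoset n} {q : GKey n} : q ∈ Egen P ↔ genOK P q := by
  simp [Egen]

lemma Xgen_mem_gcSet {P : TypeCPoset n} {q : GKey n} (hq : q ∈ Egen P) :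
    Xgen q ∈ TypeCPoset.gcSet P := by
  rw [mem_Egen] at hq
  obtain ⟨⟨i, j⟩, b⟩ := q
  cases b with
  | true =>
    simp only [genOK, if_true] at hq
    exact Or.inr (Or.inl ⟨i, j, hq, by simp [Xgen]⟩)
  | false =>
    simp only [genOK, if_false, Bool.false_eq_true] at hq
    exact Or.inr (Or.inr (Or.inl ⟨i, j, hq.1, hq.2.1, by simp [Xgen]⟩))

lemma lie_Xgen_Dmat (q : GKey n) (k : Pos n) :
    ⁅Xgen q, TypeCPoset.Dmat k⁆ = (-(cf k q)) • Xgen q := by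
  obtain ⟨⟨i, j⟩, b⟩ := q
  cases b with
  | true => simpa [Xgen, cf] using TypeCPoset.lie_Rdash_Dmat i j k
  | false => simpa [Xgen, cf] using TypeCPoset.lie_Rpm_Dmat i j k

section WithP

variable {P : TypeCPoset n} (hP : P.HeightOne)
include hP

lemma lie_Xgen_Rdash {q : GKey n} (hq : genOK P q) {i j : Pos n}
    (hij : P.lt (-j.val) (-i.val)) : ⁅Xgen q, TypeCPoset.Rdash i j⁆ = 0 := by
  obtain ⟨⟨a, b⟩, c⟩ := q
  cases c with
  | true =>
    simp only [genOK, if_true] at hq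
    simpa [Xgen] using TypeCPoset.lie_Rdash_Rdash hP hq hij
  | false =>
    simp only [genOK, if_false, Bool.false_eq_true] at hq
    simpa [Xgen] using TypeCPoset.lie_Rpm_Rdash hP hij hq.1 hq.2.1

lemma lie_Xgen_Rpm {q : GKey n} (hq : genOK P q) {i j : Pos n}
    (h1 : P.lt (-i.val) j.val) (h2 : P.lt (-j.val) i.val) :
    ⁅Xgen q, TypeCPoset.Rpm i j⁆ = 0 := by
  obtain ⟨⟨a, b⟩, c⟩ := q
  cases c with
  | true =>
    simp only [genOK, if_true] at hq
    simpa [Xgen] using TypeCPoset.lie_Rdash_Rpm hP hq h1 h2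
  | false =>
    simpa [Xgen] using TypeCPoset.lie_Rpm_Rpm a b i j

lemma lie_Xgen_Eloop {q : GKey n} (hq : genOK P q) {i : Pos n}
    (h1 : P.lt (-i.val) i.val) : ⁅Xgen q, TypeCPoset.Eloop i⁆ = 0 := by
  obtain ⟨⟨a, b⟩, c⟩ := q
  cases c with
  | true =>
    simp only [genOK, if_true] at hq
    simpa [Xgen] using TypeCPoset.lie_Rdash_Eloop hP hq h1
  | false =>
    simpa [Xgen] using TypeCPoset.lie_Rpm_Eloop a b i

/-! ### The column-sum functional -/

end WithP

/-- Whether a vertex has some element of the poset below it. -/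
def isA (P : TypeCPoset n) (v : Pos n) : Prop := ∃ x : ℤ, P.lt x v.val

/-- The weights realizing the all-ones functional on columns. -/
noncomputable def yw (P : TypeCPoset n) (v : Pos n) : ℂ :=
  if isA P v then 2⁻¹ else -2⁻¹

lemma colsum {P : TypeCPoset n} (hP : P.HeightOne) {q : GKey n} (hq : genOK P q) :
    (∑ k : Pos n, yw P k * cf k q) = 1 := by
  obtain ⟨⟨i, j⟩, b⟩ := q
  cases b with
  | true =>
    simp only [genOK, if_true] at hq
    have hij : P.lt i.val j.val := P.lt_pos_of_dashed hq
    have hAj : isA P j := ⟨i.val, hij⟩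
    have hAi : ¬ isA P i := fun ⟨x, hx⟩ => hP _ _ _ hx hij
    have hne : i ≠ j := fun h => hAi (h ▸ hAj)
    simp only [cf, if_true, mul_sub, Finset.sum_sub_distrib, mul_ite, mul_one, mul_zero]
    rw [Finset.sum_ite_eq' Finset.univ j (yw P), Finset.sum_ite_eq' Finset.univ i (yw P)]
    simp [yw, hAj, hAi]
    norm_num
  | false =>
    simp only [genOK, if_false, Bool.false_eq_true] at hq
    have hAj : isA P j := ⟨-i.val, hq.1⟩
    have hAi : isA P i := ⟨-j.val, hq.2.1⟩
    simp only [cf, if_false, Bool.false_eq_true, mul_add, Finset.sum_add_distrib, mul_ite,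
      mul_one, mul_zero]
    rw [Finset.sum_ite_eq' Finset.univ i (yw P), Finset.sum_ite_eq' Finset.univ j (yw P)]
    simp [yw, hAj, hAi]
    norm_num

end LiePoset
namespace LiePoset

open Matrix TypeCPoset

open scoped Classical

variable {n : ℕ}

/-- A distinguished matrix position for each generator key. -/
def posOf (q : GKey n) : Idx n × Idx n :=
  if q.2 then (Pos.toIdx q.1.1, Pos.toIdx q.1.2)
  else ((Pos.toIdx q.1.1).neg, Pos.toIdx q.1.2)

lemma ezero (a b c d : Idx n) (h : ¬(a = c ∧ b = d)) :
    Matrix.single a b (1 : ℂ) c d = 0 := by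
  rw [show (Matrix.single a b (1 : ℂ)) c d = if a = c ∧ b = d then 1 else 0 from rfl,
    if_neg h]

lemma Xgen_apply_posOf_self_ne_zero (q : GKey n) :
    Xgen q (posOf q).1 (posOf q).2 ≠ 0 := by
  obtain ⟨⟨i, j⟩, b⟩ := q
  cases b with
  | true =>
    have e1 : Matrix.single (Pos.toIdx j).neg (Pos.toIdx i).neg (1 : ℂ)
        (Pos.toIdx i) (Pos.toIdx j) = 0 :=
      ezero _ _ _ _ (fun hc => negtoIdx_ne_toIdx j i hc.1)
    simp only [Xgen, posOf, if_true, TypeCPoset.Rdash, Matrix.sub_apply, e1,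
      Matrix.single_apply_same]
    norm_num
  | false =>
    by_cases hij : i = j
    · subst hij
      simp only [Xgen, posOf, Bool.false_eq_true, if_false, TypeCPoset.Rpm, Matrix.add_apply,
        Matrix.single_apply_same]
      norm_num
    · have e1 : Matrix.single (Pos.toIdx j).neg (Pos.toIdx i) (1 : ℂ)
          ((Pos.toIdx i).neg) (Pos.toIdx j) = 0 :=
        ezero _ _ _ _ (fun hc => hij (negtoIdx_eq_negtoIdx.mp hc.1).symm)
      simp only [Xgen, posOf, Bool.false_eq_true, if_false, TypeCPoset.Rpm, Matrix.add_apply,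
        e1, Matrix.single_apply_same]
      norm_num

lemma Xgen_apply_posOf_eq_zero {P : TypeCPoset n} {q q' : GKey n}
    (hq : genOK P q) (hq' : genOK P q') (hne : q' ≠ q) :
    Xgen q' (posOf q).1 (posOf q).2 = 0 := by
  obtain ⟨⟨i, j⟩, b⟩ := q
  obtain ⟨⟨k, l⟩, c⟩ := q'
  cases b with
  | true =>
    -- position is (i⁺, j⁺)
    cases c with
    | true =>
      have e1 : Matrix.single (Pos.toIdx l).neg (Pos.toIdx k).neg (1 : ℂ)
          (Pos.toIdx i) (Pos.toIdx j) = 0 :=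
        ezero _ _ _ _ (fun hc => negtoIdx_ne_toIdx l i hc.1)
      have e2 : Matrix.single (Pos.toIdx k) (Pos.toIdx l) (1 : ℂ)
          (Pos.toIdx i) (Pos.toIdx j) = 0 :=
        ezero _ _ _ _ (by
          rintro ⟨hc1, hc2⟩
          exact hne (by rw [toIdx_eq_toIdx.mp hc1, toIdx_eq_toIdx.mp hc2]))
      simp [Xgen, posOf, TypeCPoset.Rdash, Matrix.sub_apply, e1, e2]
    | false =>
      have e1 : Matrix.single (Pos.toIdx k).neg (Pos.toIdx l) (1 : ℂ)
          (Pos.toIdx i) (Pos.toIdx j) = 0 :=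
        ezero _ _ _ _ (fun hc => negtoIdx_ne_toIdx k i hc.1)
      have e2 : Matrix.single (Pos.toIdx l).neg (Pos.toIdx k) (1 : ℂ)
          (Pos.toIdx i) (Pos.toIdx j) = 0 :=
        ezero _ _ _ _ (fun hc => negtoIdx_ne_toIdx l i hc.1)
      simp [Xgen, posOf, TypeCPoset.Rpm, Matrix.add_apply, e1, e2]
  | false =>
    -- position is (i⁻, j⁺)
    cases c with
    | true =>
      have e1 : Matrix.single (Pos.toIdx l).neg (Pos.toIdx k).neg (1 : ℂ)
          ((Pos.toIdx i).neg) (Pos.toIdx j) = 0 :=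
        ezero _ _ _ _ (fun hc => negtoIdx_ne_toIdx k j hc.2)
      have e2 : Matrix.single (Pos.toIdx k) (Pos.toIdx l) (1 : ℂ)
          ((Pos.toIdx i).neg) (Pos.toIdx j) = 0 :=
        ezero _ _ _ _ (fun hc => toIdx_ne_negtoIdx k i hc.1)
      simp [Xgen, posOf, TypeCPoset.Rdash, Matrix.sub_apply, e1, e2]
    | false =>
      simp only [genOK, if_false, Bool.false_eq_true] at hq hq'
      have e1 : Matrix.single (Pos.toIdx k).neg (Pos.toIdx l) (1 : ℂ)
          ((Pos.toIdx i).neg) (Pos.toIdx j) = 0 :=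
        ezero _ _ _ _ (by
          rintro ⟨hc1, hc2⟩
          exact hne (by rw [negtoIdx_eq_negtoIdx.mp hc1, toIdx_eq_toIdx.mp hc2]))
      have e2 : Matrix.single (Pos.toIdx l).neg (Pos.toIdx k) (1 : ℂ)
          ((Pos.toIdx i).neg) (Pos.toIdx j) = 0 :=
        ezero _ _ _ _ (by
          rintro ⟨hc1, hc2⟩
          have h1 : l = i := negtoIdx_eq_negtoIdx.mp hc1
          have h2 : k = j := toIdx_eq_toIdx.mp hc2
          have hji := hq'.2.2
          rw [h1, h2] at hji
          have hij : i = j := Subtype.ext (le_antisymm hq.2.2 hji)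
          exact hne (by rw [h1, h2, hij]))
      simp [Xgen, posOf, TypeCPoset.Rpm, Matrix.add_apply, e1, e2]

end LiePoset
namespace LiePoset

open SimpleGraph

variable {V : Type*} [Fintype V] [DecidableEq V]

lemma reach_del (G : SimpleGraph V) {v w : V}
    (h : (G \ SimpleGraph.fromEdgeSet {s(v, w)}).Reachable v w) :
    ∀ {a b : V}, G.Walk a b → (G \ SimpleGraph.fromEdgeSet {s(v, w)}).Reachable a b := by
  intro a b p
  induction p with
  | nil => exact Reachable.refl _
  | @cons a c b h' p ih =>
    refine Reachable.trans ?_ ih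
    by_cases he : s(a, c) = s(v, w)
    · rcases Sym2.eq_iff.mp he with ⟨rfl, rfl⟩ | ⟨rfl, rfl⟩
      · exact h
      · exact h.symm
    · exact Adj.reachable (by
        rw [SimpleGraph.sdiff_adj, SimpleGraph.fromEdgeSet_adj]
        exact ⟨h', by simp [he]⟩)

lemma conn_del (G : SimpleGraph V) (hc : G.Connected) {u : V} (c : G.Walk u u)
    (hcy : c.IsCycle) {e : Sym2 V} (he : e ∈ c.edges) :
    (G \ SimpleGraph.fromEdgeSet {e}).Connected := by
  induction e with
  | _ v w =>
    have hr := (SimpleGraph.adj_and_reachable_delete_edges_iff_exists_cycle.mpr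
      ⟨u, c, hcy, he⟩).2
    have hpre : (G \ SimpleGraph.fromEdgeSet {s(v, w)}).Preconnected := by
      intro a b
      obtain ⟨p⟩ := hc.preconnected a b
      exact reach_del G hr p
    exact (SimpleGraph.connected_iff _).mpr ⟨hpre, hc.nonempty⟩

lemma delete_edge_ncard (G : SimpleGraph V) {e : Sym2 V} (he : e ∈ G.edgeSet) :
    (G \ SimpleGraph.fromEdgeSet {e}).edgeSet.ncard = G.edgeSet.ncard - 1 ∧
      0 < G.edgeSet.ncard := by
  have hset : (G \ SimpleGraph.fromEdgeSet {e}).edgeSet = G.edgeSet \ {e} := by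
    rw [show G \ SimpleGraph.fromEdgeSet {e} = G.deleteEdges {e} from rfl,
      SimpleGraph.edgeSet_deleteEdges]
  constructor
  · rw [hset]
    exact Set.ncard_diff_singleton_of_mem he
  · exact (Set.ncard_pos (Set.toFinite _)).mpr ⟨e, he⟩

/-- A connected graph has at least `|V| - 1` edges. -/
lemma conn_card_le : ∀ (m : ℕ) (G : SimpleGraph V), G.Connected →
    G.edgeSet.ncard = m → Fintype.card V ≤ m + 1 := by
  intro m
  induction m using Nat.strong_induction_on with
  | _ m ih =>
    intro G hc hm
    by_cases ha : G.IsAcyclic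
    · have ht : G.IsTree := ⟨hc, ha⟩
      classical
      letI : Fintype G.edgeSet := Fintype.ofFinite _
      have := ht.card_edgeFinset
      have hcard : G.edgeFinset.card = m := by
        rw [← hm, SimpleGraph.edgeFinset, ← Set.ncard_eq_toFinset_card']
      omega
    · rw [SimpleGraph.IsAcyclic] at ha
      push_neg at ha
      obtain ⟨u, c, hcy⟩ := ha
      have hne : c.edges ≠ [] := by
        have h3 := hcy.three_le_length
        intro h
        rw [← SimpleGraph.Walk.length_edges, h] at h3
        simp at h3
      obtain ⟨e, he⟩ := List.exists_mem_of_ne_nil _ hne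
      have hee : e ∈ G.edgeSet := SimpleGraph.Walk.edges_subset_edgeSet c he
      obtain ⟨hcard, hpos⟩ := delete_edge_ncard G hee
      have hconn' := conn_del G hc c hcy he
      have := ih (m - 1) (by omega) _ hconn' (by rw [hcard, hm])
      omega

/-- A connected graph containing a cycle has at least `|V|` edges. -/
lemma conn_cycle_card_le (G : SimpleGraph V) (hc : G.Connected) {u : V}
    (c : G.Walk u u) (hcy : c.IsCycle) : Fintype.card V ≤ G.edgeSet.ncard := by
  have hne : c.edges ≠ [] := by
    have h3 := hcy.three_le_length
    intro h
    rw [← SimpleGraph.Walk.length_edges, h] at h3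
    simp at h3
  obtain ⟨e, he⟩ := List.exists_mem_of_ne_nil _ hne
  have hee : e ∈ G.edgeSet := SimpleGraph.Walk.edges_subset_edgeSet c he
  obtain ⟨hcard, hpos⟩ := delete_edge_ncard G hee
  have hconn' := conn_del G hc c hcy he
  have := conn_card_le _ _ hconn' hcard
  omega

/-- A connected graph containing two edge-disjoint cycles has at least `|V| + 1` edges. -/
lemma conn_two_cycles_card_le (G : SimpleGraph V) (hc : G.Connected) {u₁ u₂ : V}
    (c₁ : G.Walk u₁ u₁) (h₁ : c₁.IsCycle) (c₂ : G.Walk u₂ u₂) (h₂ : c₂.IsCycle)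
    (hdisj : ∀ e ∈ c₁.edges, e ∉ c₂.edges) :
    Fintype.card V + 1 ≤ G.edgeSet.ncard := by
  have hne : c₁.edges ≠ [] := by
    have h3 := h₁.three_le_length
    intro h
    rw [← SimpleGraph.Walk.length_edges, h] at h3
    simp at h3
  obtain ⟨e, he⟩ := List.exists_mem_of_ne_nil _ hne
  have hee : e ∈ G.edgeSet := SimpleGraph.Walk.edges_subset_edgeSet c₁ he
  obtain ⟨hcard, hpos⟩ := delete_edge_ncard G hee
  have hconn' := conn_del G hc c₁ h₁ he
  have hc₂' : ∀ e' ∈ c₂.edges, e' ∉ ({e} : Set (Sym2 V)) := by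
    intro e' he' hmem
    rw [Set.mem_singleton_iff] at hmem
    exact hdisj e he (hmem ▸ he')
  have hcyc2 : (c₂.toDeleteEdges ({e} : Set (Sym2 V)) hc₂').IsCycle :=
    SimpleGraph.Walk.IsCycle.toDeleteEdges G ({e} : Set (Sym2 V)) h₂ hc₂'
  have := conn_cycle_card_le _ hconn' (c₂.toDeleteEdges ({e} : Set (Sym2 V)) hc₂') hcyc2
  omega

end LiePoset
namespace LiePoset

open TypeCPoset

open scoped Classical

variable {n : ℕ}

lemma RG_adj (P : TypeCPoset n) (i j : Pos n) :
    (TypeCPoset.RG P).Adj i j ↔ (i ≠ j ∧ (P.lt (-i.val) j.val ∨ P.lt (-j.val) i.val ∨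
      P.lt (-i.val) (-j.val) ∨ P.lt (-j.val) (-i.val))) := Iff.rfl

/-- The boolean type of the edge `{a, b}`: `false` for non-dashed, `true` for dashed. -/
noncomputable def bkey (P : TypeCPoset n) (a b : Pos n) : Bool :=
  if P.lt (-a.val) b.val ∨ P.lt (-b.val) a.val then false else true

/-- The canonical generator key attached to an edge of `RG P`. -/
noncomputable def fkey (P : TypeCPoset n) : Sym2 (Pos n) → GKey n :=
  Sym2.lift ⟨fun a b => if a.val ≤ b.val then ((a, b), bkey P a b) else ((b, a), bkey P b a), by
    intro a b
    dsimp only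
    by_cases h : a.val ≤ b.val
    · by_cases h' : b.val ≤ a.val
      · have hab : a = b := Subtype.ext (le_antisymm h h')
        subst hab; simp
      · simp [h, h']
    · have h' : b.val ≤ a.val := le_of_not_ge h
      simp [h, h']⟩

lemma fkey_mk (P : TypeCPoset n) (a b : Pos n) :
    fkey P (Sym2.mk a b)
      = if a.val ≤ b.val then ((a, b), bkey P a b) else ((b, a), bkey P b a) :=
  Sym2.lift_mk _ a b

lemma fkey_pair (P : TypeCPoset n) (e : Sym2 (Pos n)) :
    Sym2.mk (fkey P e).1.1 (fkey P e).1.2 = e := by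
  induction e with
  | _ a b =>
    rw [fkey_mk]
    split_ifs <;> simp [Sym2.eq_swap]

lemma fkey_inj (P : TypeCPoset n) : Function.Injective (fkey P) := by
  intro e e' h
  rw [← fkey_pair P e, ← fkey_pair P e', h]

lemma key_sorted_mem (P : TypeCPoset n) {i j : Pos n} (hij : i.val ≤ j.val) (hne : i ≠ j)
    (hrel : P.lt (-i.val) j.val ∨ P.lt (-j.val) i.val ∨
      P.lt (-i.val) (-j.val) ∨ P.lt (-j.val) (-i.val)) :
    ((i, j), bkey P i j) ∈ Egen P := by
  rw [mem_Egen]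
  by_cases hnd : P.lt (-i.val) j.val ∨ P.lt (-j.val) i.val
  · have hb : bkey P i j = false := if_pos hnd
    rw [hb]
    show P.lt (-i.val) j.val ∧ P.lt (-j.val) i.val ∧ i.val ≤ j.val
    rcases hnd with h | h
    · exact ⟨h, P.lt_swap_nd h hne, hij⟩
    · exact ⟨P.lt_swap_nd h (fun hc => hne hc.symm), h, hij⟩
  · have hb : bkey P i j = true := if_neg hnd
    rw [hb]
    show P.lt (-j.val) (-i.val)
    rcases hrel with h | h | h | h
    · exact absurd (Or.inl h) hnd
    · exact absurd (Or.inr h) hnd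
    · have hle := P.compat h.1
      have hne2 : -i.val ≠ -j.val := h.2
      have : i.val = j.val := by omega
      exact absurd (Subtype.ext this) hne
    · exact h

lemma fkey_edge_mem (P : TypeCPoset n) {e : Sym2 (Pos n)}
    (he : e ∈ (TypeCPoset.RG P).edgeSet) :
    fkey P e ∈ Egen P ∧ (fkey P e).1.1 ≠ (fkey P e).1.2 := by
  induction e with
  | _ a b =>
    rw [SimpleGraph.mem_edgeSet, RG_adj] at he
    obtain ⟨hne, hrel⟩ := he
    rw [fkey_mk]
    by_cases hab : a.val ≤ b.val
    · rw [if_pos hab]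
      exact ⟨key_sorted_mem P hab hne hrel, hne⟩
    · rw [if_neg hab]
      refine ⟨key_sorted_mem P (le_of_not_ge hab) (fun hc => hne hc.symm) (by tauto),
        fun hc => hne hc.symm⟩

lemma loop_key_mem (P : TypeCPoset n) {v : Pos n} (hv : P.HasLoopAt v) :
    ((v, v), false) ∈ Egen P := by
  rw [mem_Egen]
  show P.lt (-v.val) v.val ∧ P.lt (-v.val) v.val ∧ v.val ≤ v.val
  exact ⟨hv, hv, le_refl _⟩

/-- Main counting estimate: the number of generators is at least `|V| + 1`. -/
lemma card_Egen_lb {P : TypeCPoset n} (hconn : (TypeCPoset.RG P).Connected)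
    (hcyc : ∃ s t : Finset (Sym2 (Pos n)), s ∈ P.cycles ∧ t ∈ P.cycles ∧
      Odd s.card ∧ Odd t.card ∧
      ∀ v : Pos n, ¬ (v ∈ TypeCPoset.cycleVerts s ∧ v ∈ TypeCPoset.cycleVerts t)) :
    Fintype.card (Pos n) + 1 ≤ (Egen P).card := by
  classical
  obtain ⟨s, t, hs, ht, -, -, hdisj⟩ := hcyc
  letI : Fintype (TypeCPoset.RG P).edgeSet := Fintype.ofFinite _
  set img := (TypeCPoset.RG P).edgeFinset.image (fkey P) with himgdef
  have himgsub : img ⊆ Egen P := by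
    intro q hq
    rw [himgdef, Finset.mem_image] at hq
    obtain ⟨e, he, rfl⟩ := hq
    exact (fkey_edge_mem P (SimpleGraph.mem_edgeFinset.mp he)).1
  have himgdist : ∀ q ∈ img, q.1.1 ≠ q.1.2 := by
    intro q hq
    rw [himgdef, Finset.mem_image] at hq
    obtain ⟨e, he, rfl⟩ := hq
    exact (fkey_edge_mem P (SimpleGraph.mem_edgeFinset.mp he)).2
  have hcardimg : img.card = (TypeCPoset.RG P).edgeSet.ncard := by
    rw [himgdef, Finset.card_image_of_injective _ (fkey_inj P), SimpleGraph.edgeFinset]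
    exact (Set.ncard_eq_toFinset_card' _).symm
  rcases hs with ⟨v, hv, rfl⟩ | ⟨u₁, p₁, hp₁, rfl⟩
  · rcases ht with ⟨w, hw, rfl⟩ | ⟨u₂, p₂, hp₂, rfl⟩
    · -- two self-loops
      have hvw : v ≠ w := by
        rintro rfl
        exact hdisj v ⟨⟨_, Finset.mem_singleton_self _, Sym2.mem_mk_left _ _⟩,
          ⟨_, Finset.mem_singleton_self _, Sym2.mem_mk_left _ _⟩⟩
      have h2 : ((w, w), false) ∉ img := fun h => himgdist _ h rfl
      have h1 : ((v, v), false) ∉ insert ((w, w), false) img := by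
        simp only [Finset.mem_insert]
        rintro (h | h)
        · exact hvw (congrArg (fun z : GKey n => z.1.1) h)
        · exact himgdist _ h rfl
      have hsub : insert ((v, v), false) (insert ((w, w), false) img) ⊆ Egen P := by
        rw [Finset.insert_subset_iff, Finset.insert_subset_iff]
        exact ⟨loop_key_mem P hv, loop_key_mem P hw, himgsub⟩
      have hcard := Finset.card_le_card hsub
      rw [Finset.card_insert_of_notMem h1, Finset.card_insert_of_notMem h2] at hcard
      have hA := conn_card_le ((TypeCPoset.RG P).edgeSet.ncard) (TypeCPoset.RG P) hconn rfl
      omega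
    · -- self-loop + cycle
      have h1 : ((v, v), false) ∉ img := fun h => himgdist _ h rfl
      have hsub : insert ((v, v), false) img ⊆ Egen P := by
        rw [Finset.insert_subset_iff]
        exact ⟨loop_key_mem P hv, himgsub⟩
      have hcard := Finset.card_le_card hsub
      rw [Finset.card_insert_of_notMem h1] at hcard
      have hB := conn_cycle_card_le (TypeCPoset.RG P) hconn p₂ hp₂
      omega
  · rcases ht with ⟨w, hw, rfl⟩ | ⟨u₂, p₂, hp₂, rfl⟩
    · -- cycle + self-loop
      have h1 : ((w, w), false) ∉ img := fun h => himgdist _ h rfl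
      have hsub : insert ((w, w), false) img ⊆ Egen P := by
        rw [Finset.insert_subset_iff]
        exact ⟨loop_key_mem P hw, himgsub⟩
      have hcard := Finset.card_le_card hsub
      rw [Finset.card_insert_of_notMem h1] at hcard
      have hB := conn_cycle_card_le (TypeCPoset.RG P) hconn p₁ hp₁
      omega
    · -- two cycles
      have hdisjE : ∀ e ∈ p₁.edges, e ∉ p₂.edges := by
        intro e he₁ he₂
        obtain ⟨x, hx⟩ : ∃ x, x ∈ e := ⟨e.out.1, Sym2.out_fst_mem e⟩
        exact hdisj x ⟨⟨e, List.mem_toFinset.mpr he₁, hx⟩, ⟨e, List.mem_toFinset.mpr he₂, hx⟩⟩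
      have hC := conn_two_cycles_card_le (TypeCPoset.RG P) hconn p₁ hp₁ p₂ hp₂ hdisjE
      have := Finset.card_le_card himgsub
      omega

end LiePoset
namespace LiePoset

open TypeCPoset

open scoped Classical

variable {n : ℕ} {P : TypeCPoset n} {g : LieSubalgebra ℂ (Mat n)}

/-- The generators, as elements of the subalgebra. -/
noncomputable def Xsub (hsub : ∀ q ∈ Egen P, Xgen q ∈ g) (q : GKey n) : ↥g :=
  if h : q ∈ Egen P then ⟨Xgen q, hsub q h⟩ else 0

lemma Xsub_coe (hsub : ∀ q ∈ Egen P, Xgen q ∈ g) {q : GKey n} (hq : q ∈ Egen P) :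
    ((Xsub hsub q : ↥g) : Mat n) = Xgen q := by
  rw [Xsub, dif_pos hq]

lemma lie_Xsub_D (hsub : ∀ q ∈ Egen P, Xgen q ∈ g) (k : Pos n)
    (hD : TypeCPoset.Dmat k ∈ g) {q : GKey n} (hq : q ∈ Egen P) :
    ⁅Xsub hsub q, (⟨TypeCPoset.Dmat k, hD⟩ : ↥g)⁆ = (-(cf k q)) • Xsub hsub q := by
  apply Subtype.ext
  rw [LieSubalgebra.coe_bracket, Xsub_coe hsub hq,
    show ((⟨TypeCPoset.Dmat k, hD⟩ : ↥g) : Mat n) = TypeCPoset.Dmat k from rfl,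
    show (((-(cf k q)) • Xsub hsub q : ↥g) : Mat n)
      = (-(cf k q)) • ((Xsub hsub q : ↥g) : Mat n) from rfl,
    Xsub_coe hsub hq]
  exact lie_Xgen_Dmat q k

lemma lie_finset_sum {L : Type*} [LieRing L] {ι : Type*} (s : Finset ι) (f : ι → L)
    (y : L) : ⁅∑ i ∈ s, f i, y⁆ = ∑ i ∈ s, ⁅f i, y⁆ := by
  induction s using Finset.cons_induction with
  | empty => simp
  | cons a s ha ih => rw [Finset.sum_cons, Finset.sum_cons, add_lie, ih]

/-- Reduction over the spanning set: if `φ⁅xg, -⁆` kills all generators,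
it kills everything. -/
lemma phi_lie_eq_zero (hg : g.toSubmodule = Submodule.span ℂ (TypeCPoset.gcSet P))
    (φ : Module.Dual ℂ ↥g) (xg : ↥g)
    (hD : ∀ (k : Pos n) (hDm : TypeCPoset.Dmat k ∈ g),
      φ ⁅xg, (⟨TypeCPoset.Dmat k, hDm⟩ : ↥g)⁆ = 0)
    (hRd : ∀ i j : Pos n, P.lt (-j.val) (-i.val) → ⁅(xg : Mat n), TypeCPoset.Rdash i j⁆ = 0)
    (hRp : ∀ i j : Pos n, P.lt (-i.val) j.val → P.lt (-j.val) i.val →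
      ⁅(xg : Mat n), TypeCPoset.Rpm i j⁆ = 0)
    (hEl : ∀ i : Pos n, P.lt (-i.val) i.val → ⁅(xg : Mat n), TypeCPoset.Eloop i⁆ = 0) :
    ∀ y : ↥g, φ ⁅xg, y⁆ = 0 := by
  have hmem_span : ∀ {m : Mat n}, m ∈ Submodule.span ℂ (TypeCPoset.gcSet P) → m ∈ g := by
    intro m hm
    have h1 : m ∈ g.toSubmodule := by rw [hg]; exact hm
    exact h1
  have hbr : ∀ (m : Mat n) (hm : m ∈ g), ⁅(xg : Mat n), m⁆ = 0 →
      φ ⁅xg, (⟨m, hm⟩ : ↥g)⁆ = 0 := by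
    intro m hm hz
    have h0 : ⁅xg, (⟨m, hm⟩ : ↥g)⁆ = 0 := by
      apply Subtype.ext
      rw [LieSubalgebra.coe_bracket, ZeroMemClass.coe_zero]
      exact hz
    rw [h0, map_zero]
  intro y
  have hy : (y : Mat n) ∈ Submodule.span ℂ (TypeCPoset.gcSet P) := by
    rw [← hg]; exact y.2
  have H : ∀ (m : Mat n) (hm : m ∈ Submodule.span ℂ (TypeCPoset.gcSet P)),
      φ ⁅xg, (⟨m, hmem_span hm⟩ : ↥g)⁆ = 0 := by
    intro m hm
    induction hm using Submodule.span_induction with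
    | mem m hmem =>
      rcases hmem with ⟨k, rfl⟩ | ⟨i, j, hrel, rfl⟩ | ⟨i, j, h1, h2, rfl⟩ | ⟨i, hrel, rfl⟩
      · exact hD k _
      · exact hbr _ _ (hRd i j hrel)
      · exact hbr _ _ (hRp i j h1 h2)
      · exact hbr _ _ (hEl i hrel)
    | zero =>
      have hzz : (⟨(0 : Mat n), hmem_span (Submodule.zero_mem _)⟩ : ↥g) = 0 :=
        Subtype.ext rfl
      rw [hzz, lie_zero, map_zero]
    | add a b ha hb iha ihb =>
      have hab : (⟨a + b, hmem_span (Submodule.add_mem _ ha hb)⟩ : ↥g)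
          = ⟨a, hmem_span ha⟩ + ⟨b, hmem_span hb⟩ := rfl
      rw [hab, lie_add, map_add, iha, ihb, add_zero]
    | smul r a ha iha =>
      have hra : (⟨r • a, hmem_span (Submodule.smul_mem _ r ha)⟩ : ↥g)
          = r • (⟨a, hmem_span ha⟩ : ↥g) := rfl
      rw [hra, lie_smul, map_smul, iha, smul_zero]
  have h2 := H (y : Mat n) hy
  have hyy : (⟨(y : Mat n), hmem_span hy⟩ : ↥g) = y := Subtype.ext rfl
  rwa [hyy] at h2

end LiePoset
namespace LiePoset

open TypeCPoset

open scoped Classical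

/-- **Proposition.** Let `P` be a connected type-C poset of height one.  If `RG(P)`
contains two vertex-disjoint odd cycles, then `g_C(P)` is not contact. -/
theorem not_contact_of_two_disjoint_odd_cycles (n : ℕ) (P : TypeCPoset n)
    (hP : P.HeightOne) (hconn : (TypeCPoset.RG P).Connected)
    (hcyc : ∃ s t : Finset (Sym2 (Pos n)), s ∈ P.cycles ∧ t ∈ P.cycles ∧
      Odd s.card ∧ Odd t.card ∧
      ∀ v : Pos n, ¬ (v ∈ TypeCPoset.cycleVerts s ∧ v ∈ TypeCPoset.cycleVerts t))
    (g : LieSubalgebra ℂ (Mat n))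
    (hg : g.toSubmodule = Submodule.span ℂ (TypeCPoset.gcSet P)) :
    ¬ IsContact ↥g := by
  classical
  rintro ⟨φ, -, hnd⟩
  have hmem_span : ∀ {m : Mat n}, m ∈ Submodule.span ℂ (TypeCPoset.gcSet P) → m ∈ g := by
    intro m hm
    have h1 : m ∈ g.toSubmodule := by rw [hg]; exact hm
    exact h1
  have hXmem : ∀ q ∈ Egen P, Xgen q ∈ g :=
    fun q hq => hmem_span (Submodule.subset_span (Xgen_mem_gcSet hq))
  have hDmem : ∀ k : Pos n, TypeCPoset.Dmat k ∈ g :=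
    fun k => hmem_span (Submodule.subset_span (Or.inl ⟨k, rfl⟩))
  by_cases hz : ∃ q ∈ Egen P, φ (Xsub hXmem q) = 0
  · -- some generator is killed by φ; it is a degenerate direction
    obtain ⟨q₀, hq₀, ht₀⟩ := hz
    have hgen : genOK P q₀ := mem_Egen.mp hq₀
    have hmain : ∀ y : ↥g, φ ⁅Xsub hXmem q₀, y⁆ = 0 := by
      apply phi_lie_eq_zero hg
      · intro k hDm
        rw [lie_Xsub_D hXmem k hDm hq₀, map_smul, ht₀, smul_zero]
      · intro i j hrel
        rw [Xsub_coe hXmem hq₀]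
        exact lie_Xgen_Rdash hP hgen hrel
      · intro i j h1 h2
        rw [Xsub_coe hXmem hq₀]
        exact lie_Xgen_Rpm hP hgen h1 h2
      · intro i hrel
        rw [Xsub_coe hXmem hq₀]
        exact lie_Xgen_Eloop hP hgen hrel
    have hzero := hnd (Xsub hXmem q₀) ht₀ (fun y _ => hmain y)
    have hcoe : ((Xsub hXmem q₀ : ↥g) : Mat n) = 0 := by rw [hzero]; rfl
    rw [Xsub_coe hXmem hq₀] at hcoe
    exact Xgen_apply_posOf_self_ne_zero q₀ (by rw [hcoe]; rfl)
  · -- all generators have nonzero φ-value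
    push_neg at hz
    set M : Matrix (Pos n) (↥(Egen P)) ℂ := fun k q => cf k (q : GKey n) with hMdef
    set T : ((↥(Egen P)) → ℂ) →ₗ[ℂ] (Pos n → ℂ) := M.mulVecLin with hTdef
    have hninj : ¬ Function.Injective T := by
      intro hinj
      have h1 := LinearMap.finrank_le_finrank_of_injective hinj
      rw [Module.finrank_pi, Module.finrank_pi, Fintype.card_coe] at h1
      have h2 := card_Egen_lb hconn hcyc
      omega
    have hker : LinearMap.ker T ≠ ⊥ := by
      intro h
      exact hninj (LinearMap.ker_eq_bot.mp h)
    obtain ⟨w, hwker, hw0⟩ := (Submodule.ne_bot_iff _).mp hker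
    -- extended kernel vector on all keys
    set ww : GKey n → ℂ := fun q => if h : q ∈ Egen P then w ⟨q, h⟩ else 0 with hwwdef
    have hww_eq : ∀ q : ↥(Egen P), ww (q : GKey n) = w q := by
      intro q
      rw [hwwdef]
      exact dif_pos q.2
    have hTw : ∀ k : Pos n, ∑ q ∈ Egen P, cf k q * ww q = 0 := by
      intro k
      have h0 : T w = 0 := LinearMap.mem_ker.mp hwker
      have h1 := congrFun h0 k
      rw [hTdef] at h1
      simp only [Matrix.mulVecLin_apply, Matrix.mulVec, dotProduct, hMdef,
        Pi.zero_apply] at h1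
      rw [← Finset.sum_coe_sort (Egen P) (fun q => cf k q * ww q)]
      simp only [hww_eq]
      exact h1
    -- total sum of the kernel vector vanishes
    have hsumw : ∑ q ∈ Egen P, ww q = 0 := by
      have step1 : ∑ q ∈ Egen P, ww q
          = ∑ q ∈ Egen P, (∑ k : Pos n, yw P k * cf k q) * ww q := by
        apply Finset.sum_congr rfl
        intro q hq
        rw [colsum hP (mem_Egen.mp hq), one_mul]
      have step2 : ∑ q ∈ Egen P, (∑ k : Pos n, yw P k * cf k q) * ww q
          = ∑ k : Pos n, yw P k * ∑ q ∈ Egen P, cf k q * ww q := by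
        simp_rw [Finset.sum_mul, mul_assoc]
        rw [Finset.sum_comm]
        simp_rw [← Finset.mul_sum]
      rw [step1, step2]
      simp only [hTw, mul_zero, Finset.sum_const_zero]
    -- coefficients of the degenerate direction
    set cw : GKey n → ℂ := fun q => ww q / φ (Xsub hXmem q) with hcwdef
    have hcwt : ∀ q ∈ Egen P, cw q * φ (Xsub hXmem q) = ww q := by
      intro q hq
      rw [hcwdef]
      exact div_mul_cancel₀ _ (hz q hq)
    set xg : ↥g := ∑ q ∈ Egen P, cw q • Xsub hXmem q with hxgdef
    have hxgcoe : ((xg : ↥g) : Mat n) = ∑ q ∈ Egen P, cw q • Xgen q := by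
      rw [hxgdef, AddSubmonoidClass.coe_finset_sum]
      apply Finset.sum_congr rfl
      intro q hq
      rw [show ((cw q • Xsub hXmem q : ↥g) : Mat n)
        = cw q • ((Xsub hXmem q : ↥g) : Mat n) from rfl, Xsub_coe hXmem hq]
    have hφxg : φ xg = 0 := by
      rw [hxgdef, map_sum]
      rw [← hsumw]
      apply Finset.sum_congr rfl
      intro q hq
      rw [map_smul, smul_eq_mul]
      exact hcwt q hq
    have hmain : ∀ y : ↥g, φ ⁅xg, y⁆ = 0 := by
      apply phi_lie_eq_zero hg
      · intro k hDm
        rw [hxgdef, lie_finset_sum, map_sum]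
        have hterm : ∀ q ∈ Egen P,
            φ ⁅cw q • Xsub hXmem q, (⟨TypeCPoset.Dmat k, hDm⟩ : ↥g)⁆
              = -(cf k q * ww q) := by
          intro q hq
          rw [smul_lie, lie_Xsub_D hXmem k hDm hq, map_smul, map_smul, smul_eq_mul,
            smul_eq_mul, ← hcwt q hq]
          ring
        rw [Finset.sum_congr rfl hterm, Finset.sum_neg_distrib, hTw k, neg_zero]
      · intro i j hrel
        rw [hxgcoe, lie_finset_sum]
        apply Finset.sum_eq_zero
        intro q hq
        rw [smul_lie, lie_Xgen_Rdash hP (mem_Egen.mp hq) hrel, smul_zero]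
      · intro i j h1 h2
        rw [hxgcoe, lie_finset_sum]
        apply Finset.sum_eq_zero
        intro q hq
        rw [smul_lie, lie_Xgen_Rpm hP (mem_Egen.mp hq) h1 h2, smul_zero]
      · intro i hrel
        rw [hxgcoe, lie_finset_sum]
        apply Finset.sum_eq_zero
        intro q hq
        rw [smul_lie, lie_Xgen_Eloop hP (mem_Egen.mp hq) hrel, smul_zero]
    have hzero := hnd xg hφxg (fun y _ => hmain y)
    -- but xg ≠ 0
    obtain ⟨qhat, hqhat⟩ := Function.ne_iff.mp hw0
    have hq₀ : (qhat : GKey n) ∈ Egen P := qhat.2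
    have hwwq : ww (qhat : GKey n) ≠ 0 := by
      rw [hww_eq]
      exact hqhat
    have hcwq : cw (qhat : GKey n) ≠ 0 := by
      rw [hcwdef]
      exact div_ne_zero hwwq (hz _ hq₀)
    have hentry : ((xg : ↥g) : Mat n) (posOf (qhat : GKey n)).1 (posOf (qhat : GKey n)).2
        ≠ 0 := by
      rw [hxgcoe, Matrix.sum_apply]
      rw [Finset.sum_eq_single_of_mem (qhat : GKey n) hq₀ (fun q hq hne => by
        rw [Matrix.smul_apply,
          Xgen_apply_posOf_eq_zero (mem_Egen.mp hq₀) (mem_Egen.mp hq) hne, smul_zero])]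
      rw [Matrix.smul_apply, smul_eq_mul]
      exact mul_ne_zero hcwq (Xgen_apply_posOf_self_ne_zero _)
    rw [hzero] at hentry
    exact hentry rfl

end LiePoset
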